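/- Let A be an abelian category and n ≥ 1. The functor W_n(A) → Fun([n-1], A) sending a functor F to the chain F(0,n) → F(1,n) → ⋯ → F(n-1,n) (indexed by the linear order [n-1] = {0 < ⋯ < n-1}) is fully faithful, and its essential image consists exactly of those functors [n-1] → A all of whose arrows are epimorphisms. -/

import Mathlib

open CategoryTheory CategoryTheory.Limits
open ZeroObject

/-- The poset `Ar[n]` of pairs `(i,j)` with `0 ≤ i ≤ j ≤ n`, ordered componentwise. -/
abbrev ArPos (n : ℕ) := {p : Fin (n+1) × Fin (n+1) // p.1 ≤ p.2}

/-- The morphism of `Ar[n]` from `(i,j)` to `(i',j')` when `i ≤ i'` and `j ≤ j'`. -/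
def arLe {n : ℕ} {i j i' j' : Fin (n+1)} (hij : i ≤ j) (hi'j' : i' ≤ j')
    (h1 : i ≤ i') (h2 : j ≤ j') :
    (⟨(i, j), hij⟩ : ArPos n) ⟶ ⟨(i', j'), hi'j'⟩ :=
  homOfLE (Subtype.mk_le_mk.mpr (Prod.mk_le_mk.mpr ⟨h1, h2⟩))

/-- The condition defining `W_n(A)` inside `Fun(Ar[n], A)`: each `F(i,i)` is a zero
object, and for every pair `(i,j) ≤ (i',j')` in `Ar[n]` (with all four corners in
`Ar[n]`) the square with vertices `F(i,j), F(i,j'), F(i',j), F(i',j')` is both a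
pullback and a pushout. -/
def WCond {A : Type*} [Category A] (n : ℕ) (F : ArPos n ⥤ A) : Prop :=
  (∀ i : Fin (n+1), IsZero (F.obj ⟨(i, i), le_rfl⟩)) ∧
  (∀ (i i' j j' : Fin (n+1)) (h1 : i ≤ i') (h2 : i' ≤ j) (h3 : j ≤ j'),
    IsPullback
        (F.map (arLe (h1.trans h2) ((h1.trans h2).trans h3) le_rfl h3))
        (F.map (arLe (h1.trans h2) h2 h1 le_rfl))
        (F.map (arLe ((h1.trans h2).trans h3) (h2.trans h3) h1 le_rfl))
        (F.map (arLe h2 (h2.trans h3) le_rfl h3)) ∧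
    IsPushout
        (F.map (arLe (h1.trans h2) ((h1.trans h2).trans h3) le_rfl h3))
        (F.map (arLe (h1.trans h2) h2 h1 le_rfl))
        (F.map (arLe ((h1.trans h2).trans h3) (h2.trans h3) h1 le_rfl))
        (F.map (arLe h2 (h2.trans h3) le_rfl h3)))

/-- The category `W_n(A)` of diagrams arising in level `n` of Waldhausen's
`S`-construction of `A`. -/
abbrev W (A : Type*) [Category A] (n : ℕ) := ObjectProperty.FullSubcategory (WCond (A := A) n)

/-- The monotone inclusion `[n-1] → Ar[n]`, `t ↦ (t, n)`. -/
def botMono (n : ℕ) : Fin n →o ArPos n where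
  toFun t := ⟨((⟨t.val, by omega⟩ : Fin (n+1)), Fin.last n), Fin.le_last _⟩
  monotone' s t h :=
    Subtype.mk_le_mk.mpr (Prod.mk_le_mk.mpr ⟨Fin.mk_le_mk.mpr h, le_rfl⟩)

/-- The functor `W_n(A) → Fun([n-1], A)` sending `F` to the chain
`F(0,n) → F(1,n) → ⋯ → F(n-1,n)`. -/
def botRow (A : Type*) [Category A] (n : ℕ) : W A n ⥤ (Fin n ⥤ A) :=
  ObjectProperty.ι _ ⋙
    (Functor.whiskeringLeft (Fin n) (ArPos n) A).obj (botMono n).monotone.functor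


section Aux

variable {C : Type*} [Category C]

instance instSubsingletonHomPreorder {α : Type*} [Preorder α] (x y : α) :
    Subsingleton (x ⟶ y) :=
  ⟨fun ⟨⟨_⟩⟩ ⟨⟨_⟩⟩ => rfl⟩

theorem hom_eq_hom {α : Type*} [Preorder α] {x y : α} (f g : x ⟶ y) : f = g :=
  Subsingleton.elim f g

theorem pmap_comp {α : Type*} [Preorder α] (F : α ⥤ C) {x y z : α}
    (f : x ⟶ y) (g : y ⟶ z) (h : x ⟶ z) : F.map f ≫ F.map g = F.map h := by
  rw [← F.map_comp]
  exact congrArg F.map (hom_eq_hom _ _)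

theorem pmap_id {α : Type*} [Preorder α] (F : α ⥤ C) {x : α} (f : x ⟶ x) :
    F.map f = 𝟙 (F.obj x) := by
  rw [hom_eq_hom f (𝟙 x), F.map_id]

theorem epi_of_isZero_tgt [Limits.HasZeroMorphisms C] {X Y : C} (hY : IsZero Y) (f : X ⟶ Y) :
    Epi f :=
  ⟨fun u v _ => hY.eq_of_src u v⟩

theorem mono_of_isZero_src [Limits.HasZeroMorphisms C] {X Y : C} (hX : IsZero X) (f : X ⟶ Y) :
    Mono f :=
  ⟨fun u v _ => hX.eq_of_tgt u v⟩

end Aux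

section AbelianAux

variable {C : Type*} [Category C] [Abelian C]

/-- In an abelian category, a pullback square whose `f`-edge is an epimorphism
is also a pushout square. -/
theorem isPushout_of_isPullback_of_epi {X₁ X₂ X₃ X₄ : C}
    {fst : X₁ ⟶ X₂} {snd : X₁ ⟶ X₃} {f : X₂ ⟶ X₄} {g : X₃ ⟶ X₄}
    (h : IsPullback fst snd f g) [Epi f] : IsPushout fst snd f g := by
  have sq : CommSq fst snd f g := h.toCommSq
  have hk : IsLimit sq.kernelFork := sq.isLimitEquivIsLimitKernelFork h.isLimit
  haveI : Epi (biprod.inl ≫ biprod.desc f (-g)) := by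
    rw [biprod.inl_desc]; infer_instance
  haveI hepi : Epi (biprod.desc f (-g)) := epi_of_epi biprod.inl _
  have hc : IsColimit (CokernelCofork.ofπ (biprod.desc f (-g)) (KernelFork.condition sq.kernelFork)) :=
    Abelian.epiIsCokernelOfKernel _ hk
  set e : X₂ ⊞ X₃ ⟶ X₂ ⊞ X₃ := biprod.map (𝟙 X₂) (-𝟙 X₃) with he
  have hee : e ≫ e = 𝟙 _ := by ext <;> simp [he]
  have h1 : biprod.lift fst snd ≫ e = biprod.lift fst (-snd) := by ext <;> simp [he]
  have h2 : e ≫ biprod.desc f g = biprod.desc f (-g) := by ext <;> simp [he]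
  haveI : IsIso e := ⟨e, hee, hee⟩
  have hcc : IsColimit sq.cokernelCofork := by
    refine CokernelCofork.IsColimit.ofπ _ _
      (fun {Z'} g' eq' => hc.desc (CokernelCofork.ofπ (e ≫ g')
        (by show biprod.lift fst snd ≫ e ≫ g' = 0; rw [← Category.assoc, h1, eq'])))
      (fun {Z'} g' eq' => ?_) (fun {Z'} g' eq' m hm => ?_)
    · have hfac := hc.fac (CokernelCofork.ofπ (e ≫ g')
        (by show biprod.lift fst snd ≫ e ≫ g' = 0; rw [← Category.assoc, h1, eq'])) WalkingParallelPair.one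
      dsimp at hfac
      rw [← cancel_epi e, ← Category.assoc, h2]
      exact hfac
    · refine Cofork.IsColimit.hom_ext hc ?_
      have hfac := hc.fac (CokernelCofork.ofπ (e ≫ g')
        (by show biprod.lift fst snd ≫ e ≫ g' = 0; rw [← Category.assoc, h1, eq'])) WalkingParallelPair.one
      dsimp at hfac ⊢
      rw [hfac, ← h2, Category.assoc, hm]
  exact IsPushout.of_isColimit (sq.isColimitEquivIsColimitCokernelCofork.symm hcc)

end AbelianAux

section KernelAux

variable {C : Type*} [Category C] [Abelian C]

theorem isZero_kernel_of_eq_id {X : C} (f : X ⟶ X) (hf : f = 𝟙 X) : IsZero (kernel f) := by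
  subst hf
  have hι : kernel.ι (𝟙 X) = 0 := by
    have := kernel.condition (𝟙 X); rwa [Category.comp_id] at this
  rw [IsZero.iff_id_eq_zero]
  apply (cancel_mono (kernel.ι (𝟙 X))).mp
  rw [hι]; simp

/-- If `f = 0` then `kernel f ≅ X` via `kernel.ι`. -/
noncomputable def isoSourceOfEqZero {X Y : C} (f : X ⟶ Y) (hf : f = 0) : kernel f ≅ X where
  hom := kernel.ι f
  inv := kernel.lift f (𝟙 X) (by rw [hf, Category.id_comp])
  hom_inv_id := by
    apply (cancel_mono (kernel.ι f)).mp
    simp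
  inv_hom_id := by simp

@[simp] theorem isoSourceOfEqZero_hom {X Y : C} (f : X ⟶ Y) (hf : f = 0) :
    (isoSourceOfEqZero f hf).hom = kernel.ι f := rfl

theorem kernel_lift_epi {A0 A1 B : C} (a : A0 ⟶ A1) (b : A1 ⟶ B) (c : A0 ⟶ B)
    (hc : c = a ≫ b) (ha : Epi a) (w : (kernel.ι c ≫ a) ≫ b = 0) :
    Epi (kernel.lift b (kernel.ι c ≫ a) w) := by
  subst hc
  haveI := ha
  have hl := PullbackCone.IsLimit.mk ((kernel.lift_ι b (kernel.ι (a ≫ b) ≫ a) w).symm)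
    (fun s => kernel.lift (a ≫ b) s.fst
      (by rw [← Category.assoc, s.condition, Category.assoc, kernel.condition, comp_zero]))
    (fun s => kernel.lift_ι _ _ _)
    (fun s => by
      apply (cancel_mono (kernel.ι b)).mp
      simp [s.condition])
    (fun s m h1 _ => by
      apply (cancel_mono (kernel.ι (a ≫ b))).mp
      simp [h1])
  exact Abelian.epi_snd_of_isLimit a (kernel.ι b) hl

theorem kernel_sq_isPullback {A0 A1 B0 B1 : C}
    (p : A0 ⟶ A1) (q : B0 ⟶ B1) (u00 : A0 ⟶ B0) (u01 : A0 ⟶ B1) (u10 : A1 ⟶ B0) (u11 : A1 ⟶ B1)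
    (e0 : A0 ⟶ A0) (e1 : A1 ⟶ A1) (he0 : e0 = 𝟙 A0) (he1 : e1 = 𝟙 A1)
    (h00 : u00 = p ≫ u10) (h11 : u11 = u10 ≫ q) (h01 : u01 = p ≫ u11)
    (w1 : (kernel.ι u00 ≫ e0) ≫ u01 = 0) (w2 : (kernel.ι u00 ≫ p) ≫ u10 = 0)
    (w3 : (kernel.ι u01 ≫ p) ≫ u11 = 0) (w4 : (kernel.ι u10 ≫ e1) ≫ u11 = 0) :
    IsPullback (kernel.lift u01 (kernel.ι u00 ≫ e0) w1)
      (kernel.lift u10 (kernel.ι u00 ≫ p) w2)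
      (kernel.lift u11 (kernel.ι u01 ≫ p) w3)
      (kernel.lift u11 (kernel.ι u10 ≫ e1) w4) := by
  subst he0 he1 h11 h01 h00
  have comm : kernel.lift (p ≫ u10 ≫ q) (kernel.ι (p ≫ u10) ≫ 𝟙 A0) w1 ≫
        kernel.lift (u10 ≫ q) (kernel.ι (p ≫ u10 ≫ q) ≫ p) w3 =
      kernel.lift u10 (kernel.ι (p ≫ u10) ≫ p) w2 ≫
        kernel.lift (u10 ≫ q) (kernel.ι u10 ≫ 𝟙 A1) w4 := by
    apply (cancel_mono (kernel.ι (u10 ≫ q))).mp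
    simp
  refine IsPullback.of_isLimit (PullbackCone.IsLimit.mk comm
    (fun s => kernel.lift (p ≫ u10) (s.fst ≫ kernel.ι (p ≫ u10 ≫ q)) ?_)
    (fun s => ?_) (fun s => ?_) (fun s m h1 _ => ?_))
  · have h1 : s.fst ≫ kernel.ι (p ≫ u10 ≫ q) ≫ p = s.snd ≫ kernel.ι u10 := by
      have := s.condition =≫ kernel.ι (u10 ≫ q)
      simpa using this
    simpa using h1 =≫ u10
  · apply (cancel_mono (kernel.ι (p ≫ u10 ≫ q))).mp
    simp
  · apply (cancel_mono (kernel.ι u10)).mp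
    have h1 : s.fst ≫ kernel.ι (p ≫ u10 ≫ q) ≫ p = s.snd ≫ kernel.ι u10 := by
      have := s.condition =≫ kernel.ι (u10 ≫ q)
      simpa using this
    simp [h1]
  · apply (cancel_mono (kernel.ι (p ≫ u10))).mp
    have := h1 =≫ kernel.ι (p ≫ u10 ≫ q)
    simpa using this

end KernelAux
section DSide

variable {A : Type*} [Category A] [Abelian A] {n : ℕ}

/-- Extension of `D : Fin n ⥤ A` to `Fin (n+1)` by a zero object: objects. -/
noncomputable def obj' (D : Fin n ⥤ A) (i : Fin (n+1)) : A :=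
  if h : i.val < n then D.obj ⟨i.val, h⟩ else 0

theorem obj'_eq (D : Fin n ⥤ A) {i : Fin (n+1)} (h : i.val < n) :
    obj' D i = D.obj ⟨i.val, h⟩ := by
  unfold obj'; rw [dif_pos h]

theorem obj'_eq_zero (D : Fin n ⥤ A) {i : Fin (n+1)} (h : ¬ i.val < n) :
    obj' D i = 0 := by
  unfold obj'; rw [dif_neg h]

/-- Extension of `D : Fin n ⥤ A` to `Fin (n+1)` by a zero object: morphisms. -/
noncomputable def map' (D : Fin n ⥤ A) {i j : Fin (n+1)} (hij : i ≤ j) : obj' D i ⟶ obj' D j :=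
  if hj : j.val < n then
    eqToHom (obj'_eq D (lt_of_le_of_lt hij hj)) ≫
      D.map (homOfLE (show (⟨i.val, lt_of_le_of_lt hij hj⟩ : Fin n) ≤ ⟨j.val, hj⟩ from hij)) ≫
      eqToHom (obj'_eq D hj).symm
  else 0

theorem map'_eq_zero (D : Fin n ⥤ A) {i j : Fin (n+1)} (hij : i ≤ j) (hj : ¬ j.val < n) :
    map' D hij = 0 := by
  unfold map'; rw [dif_neg hj]

theorem map'_id (D : Fin n ⥤ A) {i : Fin (n+1)} (h : i ≤ i) :
    map' D h = 𝟙 (obj' D i) := by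
  by_cases hi : i.val < n
  · unfold map'
    rw [dif_pos hi, hom_eq_hom (homOfLE _) (𝟙 (⟨i.val, hi⟩ : Fin n)), D.map_id,
      Category.id_comp, eqToHom_trans, eqToHom_refl]
  · have hz : IsZero (obj' D i) := by
      rw [obj'_eq_zero D hi]; exact isZero_zero A
    exact hz.eq_of_src _ _

theorem map'_comp (D : Fin n ⥤ A) {i j k : Fin (n+1)} (h1 : i ≤ j) (h2 : j ≤ k) (h : i ≤ k) :
    map' D h = map' D h1 ≫ map' D h2 := by
  by_cases hk : k.val < n
  · have hj : j.val < n := lt_of_le_of_lt h2 hk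
    have hi : i.val < n := lt_of_le_of_lt h1 hj
    unfold map'
    rw [dif_pos hk, dif_pos hk, dif_pos hj]
    simp only [Category.assoc, eqToHom_trans_assoc, eqToHom_refl, Category.id_comp]
    rw [← Category.assoc (D.map _), ← D.map_comp]
    congr 1
  · rw [map'_eq_zero D h hk, map'_eq_zero D h2 hk, comp_zero]

theorem map'_epi (D : Fin n ⥤ A) (hD : ∀ (s t : Fin n) (f : s ⟶ t), Epi (D.map f))
    {i j : Fin (n+1)} (hij : i ≤ j) : Epi (map' D hij) := by
  by_cases hj : j.val < n
  · unfold map'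
    rw [dif_pos hj]
    haveI := hD _ _ (homOfLE (show (⟨i.val, lt_of_le_of_lt hij hj⟩ : Fin n) ≤ ⟨j.val, hj⟩
      from hij))
    infer_instance
  · have hz : IsZero (obj' D j) := by
      rw [obj'_eq_zero D hj]; exact isZero_zero A
    exact epi_of_isZero_tgt hz _

/-- The Waldhausen-type diagram built from a chain `D`. -/
noncomputable def mkF (D : Fin n ⥤ A) : ArPos n ⥤ A where
  obj p := kernel (map' D p.2)
  map {p q} f := kernel.lift (map' D q.2) (kernel.ι (map' D p.2) ≫ map' D (leOfHom f).1)
    (by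
      rw [Category.assoc,
        show map' D (leOfHom f).1 ≫ map' D q.2 = map' D p.2 ≫ map' D (leOfHom f).2 from
          (map'_comp D (leOfHom f).1 q.2 ((leOfHom f).1.trans q.2)).symm.trans
            (map'_comp D p.2 (leOfHom f).2 ((leOfHom f).1.trans q.2)),
        ← Category.assoc, kernel.condition, zero_comp])
  map_id p := by
    apply (cancel_mono (kernel.ι (map' D p.2))).mp
    rw [kernel.lift_ι, map'_id]
    simp
  map_comp {p q r} f g := by
    apply (cancel_mono (kernel.ι (map' D r.2))).mp
    simp only [kernel.lift_ι, Category.assoc, kernel.lift_ι_assoc]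
    rw [← map'_comp D (leOfHom f).1 (leOfHom g).1 (leOfHom (f ≫ g)).1]

theorem mkF_wcond (D : Fin n ⥤ A) (hD : ∀ (s t : Fin n) (f : s ⟶ t), Epi (D.map f)) :
    WCond n (mkF D) := by
  constructor
  · intro i
    exact isZero_kernel_of_eq_id _ (map'_id D _)
  · intro i i' j j' h1 h2 h3
    have hpb : IsPullback
        ((mkF D).map (arLe (h1.trans h2) ((h1.trans h2).trans h3) le_rfl h3))
        ((mkF D).map (arLe (h1.trans h2) h2 h1 le_rfl))
        ((mkF D).map (arLe ((h1.trans h2).trans h3) (h2.trans h3) h1 le_rfl))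
        ((mkF D).map (arLe h2 (h2.trans h3) le_rfl h3)) := by
      exact kernel_sq_isPullback (map' D h1) (map' D h3) (map' D (h1.trans h2))
        (map' D ((h1.trans h2).trans h3)) (map' D h2) (map' D (h2.trans h3))
        (map' D (le_refl i)) (map' D (le_refl i'))
        (map'_id D _) (map'_id D _)
        (map'_comp D h1 h2 _) (map'_comp D h2 h3 _) (map'_comp D h1 (h2.trans h3) _)
        _ _ _ _
    refine ⟨hpb, ?_⟩
    haveI : Epi ((mkF D).map (arLe ((h1.trans h2).trans h3) (h2.trans h3) h1 le_rfl)) := by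
      exact kernel_lift_epi (map' D h1) (map' D (h2.trans h3))
        (map' D ((h1.trans h2).trans h3)) (map'_comp D h1 (h2.trans h3) _)
        (map'_epi D hD h1) _
    exact isPushout_of_isPullback_of_epi hpb

end DSide
section RowIso

variable {A : Type*} [Category A] [Abelian A] {n : ℕ}

theorem map'_last (D : Fin n ⥤ A) {i : Fin (n+1)} (h : i ≤ Fin.last n) :
    map' D h = 0 :=
  map'_eq_zero D h (by simp)

/-- The bottom row of `mkF D` is isomorphic to `D`. -/
noncomputable def rowIso (D : Fin n ⥤ A) :
    (botMono n).monotone.functor ⋙ mkF D ≅ D :=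
  NatIso.ofComponents
    (fun t => isoSourceOfEqZero (map' D ((botMono n t).2)) (map'_last D _) ≪≫
      eqToIso (obj'_eq D t.isLt))
    (by
      intro s t f
      have key : ∀ (h' : ((botMono n) s).1.1 ≤ ((botMono n) t).1.1),
          map' D h' ≫ eqToHom (obj'_eq D t.isLt) = eqToHom (obj'_eq D s.isLt) ≫ D.map f := by
        intro h'
        unfold map'
        rw [dif_pos (show ((botMono n t).1.1.val < n) from t.isLt)]
        simp only [Category.assoc, eqToHom_trans, eqToHom_refl, Category.comp_id]
        congr 1
      simp only [Iso.trans_hom, eqToIso.hom, isoSourceOfEqZero_hom, Functor.comp_map]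
      show kernel.lift _ _ _ ≫ kernel.ι _ ≫ eqToHom (obj'_eq D (i := (botMono n t).1.1) t.isLt) = (kernel.ι _ ≫ eqToHom (obj'_eq D (i := (botMono n s).1.1) s.isLt)) ≫ D.map f
      exact (kernel.lift_ι_assoc _ _ _ _).trans ((Category.assoc _ _ _).trans ((whisker_eq _ (key _)).trans (Category.assoc _ _ _).symm)))

end RowIso
section WSide

variable {A : Type*} [Category A] [Abelian A] {n : ℕ}

theorem w_row_epi (F : ArPos n ⥤ A) (hF : WCond n F) {i j : Fin (n+1)} (h : i ≤ j) :
    Epi (F.map (arLe (Fin.le_last i) (Fin.le_last j) h le_rfl)) := by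
  have hpo := (hF.2 i j j (Fin.last n) h le_rfl (Fin.le_last j)).2
  haveI : Epi (F.map (arLe (h.trans le_rfl) le_rfl h le_rfl)) :=
    epi_of_isZero_tgt (hF.1 j) _
  exact PushoutCocone.epi_inl_of_is_pushout_of_epi hpo.isColimit

theorem w_mono (F : ArPos n ⥤ A) (hF : WCond n F) {i j : Fin (n+1)} (h : i ≤ j) :
    Mono (F.map (arLe h (Fin.le_last i) le_rfl (Fin.le_last j))) := by
  have hpb := (hF.2 i j j (Fin.last n) h le_rfl (Fin.le_last j)).1
  haveI : Mono (F.map (arLe le_rfl (le_rfl.trans (Fin.le_last j)) le_rfl (Fin.le_last j))) :=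
    mono_of_isZero_src (hF.1 j) _
  exact PullbackCone.mono_fst_of_is_pullback_of_mono hpb.isLimit

variable (F G : W A n)

/-- Extension of a natural transformation of bottom rows to all of `F(·, n)`. -/
noncomputable def phihat (φ : (botRow A n).obj F ⟶ (botRow A n).obj G) (i : Fin (n+1)) :
    F.obj.obj ⟨(i, Fin.last n), Fin.le_last i⟩ ⟶ G.obj.obj ⟨(i, Fin.last n), Fin.le_last i⟩ :=
  if h : i.val < n then φ.app ⟨i.val, h⟩ else 0

theorem phihat_nat (φ : (botRow A n).obj F ⟶ (botRow A n).obj G) {i i' : Fin (n+1)}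
    (h : i ≤ i') :
    F.obj.map (arLe (Fin.le_last i) (Fin.le_last i') h le_rfl) ≫ phihat F G φ i' =
      phihat F G φ i ≫ G.obj.map (arLe (Fin.le_last i) (Fin.le_last i') h le_rfl) := by
  by_cases hi' : i'.val < n
  · have hi : i.val < n := lt_of_le_of_lt h hi'
    have e1 : phihat F G φ i' = φ.app ⟨i'.val, hi'⟩ := dif_pos hi'
    have e2 : phihat F G φ i = φ.app ⟨i.val, hi⟩ := dif_pos hi
    rw [e1, e2]
    exact φ.naturality (homOfLE (show (⟨i.val, hi⟩ : Fin n) ≤ ⟨i'.val, hi'⟩ from h))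
  · have hi'' : i' = Fin.last n := Fin.ext (by have h2 := i'.isLt; rw [Fin.val_last]; omega)
    subst hi''
    exact (G.property.1 (Fin.last n)).eq_of_tgt _ _

/-- The component at `p` of the extension of `φ`. -/
noncomputable def extApp (φ : (botRow A n).obj F ⟶ (botRow A n).obj G) (p : ArPos n) :
    F.obj.obj p ⟶ G.obj.obj p :=
  (G.property.2 p.1.1 p.1.2 p.1.2 (Fin.last n) p.2 le_rfl (Fin.le_last p.1.2)).1.lift
    (F.obj.map (arLe p.2 (Fin.le_last p.1.1) le_rfl (Fin.le_last p.1.2)) ≫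
      phihat F G φ p.1.1) 0
    (by
      rw [zero_comp, Category.assoc]
      rw [show G.obj.map (arLe ((p.2.trans le_rfl).trans (Fin.le_last p.1.2))
          (le_rfl.trans (Fin.le_last p.1.2)) p.2 le_rfl) =
        G.obj.map (arLe (Fin.le_last p.1.1) (Fin.le_last p.1.2) p.2 le_rfl) from rfl]
      rw [← phihat_nat F G φ p.2, ← Category.assoc,
        pmap_comp F.obj _ _ (arLe p.2 (Fin.le_last p.1.2) p.2 (Fin.le_last p.1.2)),
        show F.obj.map (arLe p.2 (Fin.le_last p.1.2) p.2 (Fin.le_last p.1.2)) =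
            F.obj.map (arLe p.2 le_rfl p.2 le_rfl) ≫
              F.obj.map (arLe le_rfl (Fin.le_last p.1.2) le_rfl (Fin.le_last p.1.2)) from
          (pmap_comp _ _ _ _).symm,
        show F.obj.map (arLe p.2 le_rfl p.2 le_rfl) = 0 from
          (F.property.1 p.1.2).eq_of_tgt _ _]
      simp)

theorem extApp_fst (φ : (botRow A n).obj F ⟶ (botRow A n).obj G) (p : ArPos n) :
    extApp F G φ p ≫
        G.obj.map (arLe p.2 (Fin.le_last p.1.1) le_rfl (Fin.le_last p.1.2)) =
      F.obj.map (arLe p.2 (Fin.le_last p.1.1) le_rfl (Fin.le_last p.1.2)) ≫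
        phihat F G φ p.1.1 :=
  IsPullback.lift_fst _ _ _ _

/-- The extension of `φ` to a natural transformation `F ⟶ G`. -/
noncomputable def extendHom (φ : (botRow A n).obj F ⟶ (botRow A n).obj G) : F ⟶ G where
  hom.app p := extApp F G φ p
  hom.naturality {p q} f := by
    haveI := w_mono G.obj G.property q.2
    apply (cancel_mono (G.obj.map (arLe q.2 (Fin.le_last q.1.1) le_rfl
      (Fin.le_last q.1.2)))).mp
    have hL : (F.obj.map f ≫ extApp F G φ q) ≫
          G.obj.map (arLe q.2 (Fin.le_last q.1.1) le_rfl (Fin.le_last q.1.2)) =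
        F.obj.map (arLe p.2 (Fin.le_last q.1.1) (leOfHom f).1 (Fin.le_last p.1.2)) ≫
          phihat F G φ q.1.1 := by
      rw [Category.assoc, extApp_fst F G φ q, ← Category.assoc,
        pmap_comp F.obj f (arLe q.2 (Fin.le_last q.1.1) le_rfl (Fin.le_last q.1.2))
          (arLe p.2 (Fin.le_last q.1.1) (leOfHom f).1 (Fin.le_last p.1.2))]
    have hR : (extApp F G φ p ≫ G.obj.map f) ≫
          G.obj.map (arLe q.2 (Fin.le_last q.1.1) le_rfl (Fin.le_last q.1.2)) =
        F.obj.map (arLe p.2 (Fin.le_last q.1.1) (leOfHom f).1 (Fin.le_last p.1.2)) ≫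
          phihat F G φ q.1.1 := by
      rw [Category.assoc,
        pmap_comp G.obj f (arLe q.2 (Fin.le_last q.1.1) le_rfl (Fin.le_last q.1.2))
          (arLe p.2 (Fin.le_last q.1.1) (leOfHom f).1 (Fin.le_last p.1.2)),
        show G.obj.map (arLe p.2 (Fin.le_last q.1.1) (leOfHom f).1 (Fin.le_last p.1.2)) =
            G.obj.map (arLe p.2 (Fin.le_last p.1.1) le_rfl (Fin.le_last p.1.2)) ≫
              G.obj.map (arLe (Fin.le_last p.1.1) (Fin.le_last q.1.1) (leOfHom f).1 le_rfl) from
          (pmap_comp _ _ _ _).symm,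
        ← Category.assoc, extApp_fst F G φ p, Category.assoc,
        ← phihat_nat F G φ (leOfHom f).1, ← Category.assoc,
        pmap_comp F.obj (arLe p.2 (Fin.le_last p.1.1) le_rfl (Fin.le_last p.1.2))
          (arLe (Fin.le_last p.1.1) (Fin.le_last q.1.1) (leOfHom f).1 le_rfl)
          (arLe p.2 (Fin.le_last q.1.1) (leOfHom f).1 (Fin.le_last p.1.2))]
    exact hL.trans hR.symm

theorem botRow_map_extendHom (φ : (botRow A n).obj F ⟶ (botRow A n).obj G) :
    (botRow A n).map (extendHom F G φ) = φ := by
  apply NatTrans.ext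
  funext t
  show extApp F G φ (botMono n t) = φ.app t
  have h1 := extApp_fst F G φ (botMono n t)
  rw [show G.obj.map (arLe (botMono n t).2 (Fin.le_last (botMono n t).1.1) le_rfl
        (Fin.le_last (botMono n t).1.2)) = 𝟙 _ from pmap_id _ _,
      show F.obj.map (arLe (botMono n t).2 (Fin.le_last (botMono n t).1.1) le_rfl
        (Fin.le_last (botMono n t).1.2)) = 𝟙 _ from pmap_id _ _] at h1
  exact (Category.comp_id (extApp F G φ (botMono n t))).symm.trans
    (h1.trans ((Category.id_comp _).trans (dif_pos t.isLt)))

end WSide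
section Faithful

variable {A : Type*} [Category A] [Abelian A] {n : ℕ}

theorem w_hom_ext (F G : W A n) (α β : F ⟶ G)
    (h : (botRow A n).map α = (botRow A n).map β) : α = β := by
  apply ObjectProperty.hom_ext
  apply NatTrans.ext
  funext p
  by_cases hp : p.1.1.val < n
  · haveI := w_mono G.obj G.property p.2
    apply (cancel_mono (G.obj.map (arLe p.2 (Fin.le_last p.1.1) le_rfl
      (Fin.le_last p.1.2)))).mp
    rw [← α.hom.naturality (arLe p.2 (Fin.le_last p.1.1) le_rfl (Fin.le_last p.1.2)),
      ← β.hom.naturality (arLe p.2 (Fin.le_last p.1.1) le_rfl (Fin.le_last p.1.2))]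
    have hc := NatTrans.congr_app h ⟨p.1.1.val, hp⟩
    have hc' : α.hom.app ⟨(p.1.1, Fin.last n), Fin.le_last p.1.1⟩ =
        β.hom.app ⟨(p.1.1, Fin.last n), Fin.le_last p.1.1⟩ := hc
    rw [hc']
  · have hz : IsZero (F.obj.obj p) := by
      have h1 : p.1.1 = Fin.last n := Fin.ext (by have := p.1.1.isLt; rw [Fin.val_last]; omega)
      have h2 : p.1.2 = Fin.last n := Fin.ext (by
        have h3 := p.2
        have h4 : p.1.1.val ≤ p.1.2.val := h3
        have h5 := p.1.2.isLt
        have h6 := congrArg Fin.val h1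
        rw [Fin.val_last] at h6 ⊢
        omega)
      have h7 : p = ⟨(Fin.last n, Fin.last n), le_rfl⟩ := Subtype.ext (Prod.ext h1 h2)
      rw [h7]
      exact F.property.1 (Fin.last n)
    exact hz.eq_of_src _ _

end Faithful

/-- For an abelian category `A` and `n ≥ 1`, the functor
`W_n(A) → Fun([n-1], A)`, `F ↦ (F(0,n) → ⋯ → F(n-1,n))`, is fully faithful with
essential image the functors `[n-1] → A` all of whose arrows are epimorphisms. -/
theorem statement10 (A : Type*) [Category A] [Abelian A] (n : ℕ) (hn : 1 ≤ n) :
    (botRow A n).Full ∧ (botRow A n).Faithful ∧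
    (∀ D : Fin n ⥤ A,
      (botRow A n).essImage D ↔ ∀ (s t : Fin n) (f : s ⟶ t), Epi (D.map f)) := by
  refine ⟨⟨fun {F G} φ => ⟨extendHom F G φ, botRow_map_extendHom F G φ⟩⟩,
    ⟨fun {F G} α β h => w_hom_ext F G α β h⟩, fun D => ⟨?_, ?_⟩⟩
  · rintro ⟨G, ⟨e⟩⟩ s t f
    have hnat := e.hom.naturality f
    have hD : D.map f = inv (e.hom.app s) ≫ ((botRow A n).obj G).map f ≫ e.hom.app t := by
      rw [hnat, IsIso.inv_hom_id_assoc]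
    rw [hD]
    haveI : Epi (((botRow A n).obj G).map f) :=
      w_row_epi G.obj G.property
        (show (⟨s.val, by omega⟩ : Fin (n+1)) ≤ ⟨t.val, by omega⟩ from
          Fin.mk_le_mk.mpr (leOfHom f))
    infer_instance
  · intro hD
    exact ⟨⟨mkF D, mkF_wcond D hD⟩, ⟨rowIso D⟩⟩
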